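/- Let d ≥ 1 be an integer, α ∈ (0,2) and p > d/(d+α). Then for every t > 0: ∫_{ℝ^d} g(t,y)^p dy = (κ_{d,α}^p·π^{d/2}/t^{(p−1)d/α})·Γ(p(d+α)/2 − d/2)/Γ(p(d+α)/2). -/

import Mathlib

open MeasureTheory Real Set
open scoped ENNReal

lemma gamma_exp_integral {b s : ℝ} (hb : 0 < b) (hs : 0 < s) :
    ∫ u in Ioi (0:ℝ), u ^ (s-1) * rexp (-b * u) = b ^ (-s) * Gamma s := by
  have h := integral_rpow_mul_exp_neg_mul_rpow (p := 1) (q := s - 1) (b := b)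
    one_pos (by linarith) hb
  simp only [rpow_one, sub_add_cancel, div_one, one_div, inv_one, mul_one] at h
  simpa using h

lemma gamma_exp_integrable {b s : ℝ} (hb : 0 < b) (hs : 0 < s) :
    IntegrableOn (fun u : ℝ => u ^ (s-1) * rexp (-b * u)) (Ioi 0) := by
  have h := integrableOn_rpow_mul_exp_neg_mul_rpow (p := 1) (s := s - 1) (b := b)
    (by linarith) one_pos hb
  simpa [rpow_one] using h

lemma gaussian_integrable_V (d : ℕ) {u : ℝ} (hu : 0 < u) :
    Integrable (fun x : EuclideanSpace ℝ (Fin d) => rexp (-u * ‖x‖ ^ 2)) := by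
  have h := (GaussianFourier.integrable_cexp_neg_mul_sq_norm_add
    (V := EuclideanSpace ℝ (Fin d)) (b := (u:ℂ)) (by simpa using hu) 0 0).norm
  refine h.congr (Filter.Eventually.of_forall fun x => ?_)
  simp [Complex.norm_exp]
  norm_cast
  left; rfl

lemma aux_integral (d : ℕ) {a s : ℝ} (ha : 0 < a) (hs0 : 0 < s) (hs : (d:ℝ)/2 < s) :
    ∫ x : EuclideanSpace ℝ (Fin d), (a + ‖x‖ ^ 2) ^ (-s) =
      π ^ ((d:ℝ)/2) * a ^ ((d:ℝ)/2 - s) * (Gamma (s - (d:ℝ)/2) / Gamma s) := by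
  set V := EuclideanSpace ℝ (Fin d)
  have hΓ : 0 < Gamma s := Gamma_pos_of_pos hs0
  set f : V → ℝ → ℝ≥0∞ :=
    fun x u => ENNReal.ofReal (u ^ (s-1) * rexp (-(a + ‖x‖^2) * u)) with hf
  have hmeas : AEMeasurable (Function.uncurry f)
      ((volume : Measure V).prod (volume.restrict (Ioi 0))) := by
    apply Measurable.aemeasurable
    simp only [hf, Function.uncurry]
    fun_prop
  -- Step A : inner integral over u
  have hA : ∀ x : V,
      (∫⁻ u in Ioi (0:ℝ), f x u)
        = ENNReal.ofReal ((a + ‖x‖^2) ^ (-s)) * ENNReal.ofReal (Gamma s) := by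
    intro x
    have hb : 0 < a + ‖x‖^2 := by positivity
    rw [hf, ← ofReal_integral_eq_lintegral_ofReal (gamma_exp_integrable hb hs0)
      ((ae_restrict_iff' measurableSet_Ioi).mpr (Filter.Eventually.of_forall
        fun u hu => mul_nonneg (rpow_nonneg (le_of_lt hu) _) (exp_pos _).le)),
      gamma_exp_integral hb hs0, ENNReal.ofReal_mul (rpow_nonneg hb.le _)]
  -- Step B : inner integral over x for fixed u > 0
  have hB : ∀ u : ℝ, 0 < u →
      (∫⁻ x : V, f x u)
        = ENNReal.ofReal (π ^ ((d:ℝ)/2) * (u ^ (s - 1 - (d:ℝ)/2) * rexp (-a * u))) := by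
    intro u hu
    have key : ∀ x : V, u ^ (s-1) * rexp (-(a + ‖x‖^2) * u)
        = (u ^ (s-1) * rexp (-a * u)) * rexp (-u * ‖x‖^2) := by
      intro x
      rw [mul_assoc, ← Real.exp_add]
      ring_nf
    have hC : 0 ≤ u ^ (s-1) * rexp (-a * u) :=
      mul_nonneg (rpow_nonneg hu.le _) (exp_pos _).le
    simp_rw [hf, key, ENNReal.ofReal_mul hC]
    rw [lintegral_const_mul' _ _ ENNReal.ofReal_ne_top,
      ← ofReal_integral_eq_lintegral_ofReal (gaussian_integrable_V d hu)
        (Filter.Eventually.of_forall fun x => (exp_pos _).le),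
      GaussianFourier.integral_rexp_neg_mul_sq_norm hu, finrank_euclideanSpace_fin,
      ← ENNReal.ofReal_mul hC]
    congr 1
    rw [div_rpow pi_pos.le hu.le, div_eq_mul_inv, ← Real.rpow_neg hu.le,
      show s - 1 - (d:ℝ)/2 = (s-1) + (-((d:ℝ)/2)) by ring, Real.rpow_add hu]
    ring
  -- Step C : the u integral after swapping
  have hs' : 0 < s - (d:ℝ)/2 := by linarith
  have hC : (∫⁻ u in Ioi (0:ℝ),
        ENNReal.ofReal (π ^ ((d:ℝ)/2) * (u ^ (s - 1 - (d:ℝ)/2) * rexp (-a * u))))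
      = ENNReal.ofReal (π ^ ((d:ℝ)/2) * (a ^ (-(s - (d:ℝ)/2)) * Gamma (s - (d:ℝ)/2))) := by
    have hint : IntegrableOn
        (fun u : ℝ => π ^ ((d:ℝ)/2) * (u ^ (s - 1 - (d:ℝ)/2) * rexp (-a * u))) (Ioi 0) := by
      have := (gamma_exp_integrable ha hs').const_mul (π ^ ((d:ℝ)/2))
      simpa [IntegrableOn, show s - (d:ℝ)/2 - 1 = s - 1 - (d:ℝ)/2 by ring] using this
    rw [← ofReal_integral_eq_lintegral_ofReal hint
      ((ae_restrict_iff' measurableSet_Ioi).mpr (Filter.Eventually.of_forall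
        fun u hu => mul_nonneg (rpow_nonneg pi_pos.le _)
          (mul_nonneg (rpow_nonneg (le_of_lt hu) _) (exp_pos _).le)))]
    congr 1
    rw [integral_const_mul]
    congr 1
    have := gamma_exp_integral ha hs'
    rw [show s - (d:ℝ)/2 - 1 = s - 1 - (d:ℝ)/2 by ring] at this
    exact this
  -- swap and combine
  have hswap := lintegral_lintegral_swap hmeas
  have hkey : (∫⁻ x : V, ENNReal.ofReal ((a + ‖x‖^2) ^ (-s))) * ENNReal.ofReal (Gamma s)
      = ENNReal.ofReal (π ^ ((d:ℝ)/2) * (a ^ (-(s - (d:ℝ)/2)) * Gamma (s - (d:ℝ)/2))) := by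
    rw [← lintegral_mul_const' _ _ ENNReal.ofReal_ne_top]
    simp_rw [← hA]
    rw [hswap, ← hC]
    exact setLIntegral_congr_fun measurableSet_Ioi
      (fun u hu => hB u hu)
  -- extract the lintegral value
  have hΓne : ENNReal.ofReal (Gamma s) ≠ 0 := by
    simp [ENNReal.ofReal_eq_zero, not_le, hΓ]
  have hX : (∫⁻ x : V, ENNReal.ofReal ((a + ‖x‖^2) ^ (-s)))
      = ENNReal.ofReal (π ^ ((d:ℝ)/2) * (a ^ (-(s - (d:ℝ)/2)) * Gamma (s - (d:ℝ)/2)))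
        / ENNReal.ofReal (Gamma s) := by
    rw [ENNReal.eq_div_iff hΓne ENNReal.ofReal_ne_top, mul_comm]
    exact hkey
  have hLHS : ∫ x : V, (a + ‖x‖ ^ 2) ^ (-s)
      = ((∫⁻ x : V, ENNReal.ofReal ((a + ‖x‖^2) ^ (-s)))).toReal := by
    rw [integral_eq_lintegral_of_nonneg_ae
      (Filter.Eventually.of_forall fun x => rpow_nonneg (by positivity) _)
      ((Continuous.rpow_const (by continuity) fun x => Or.inl (by positivity)).aestronglyMeasurable)]
  rw [hLHS, hX, ENNReal.toReal_div, ENNReal.toReal_ofReal (by positivity),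
    ENNReal.toReal_ofReal hΓ.le]
  rw [show -(s - (d:ℝ)/2) = (d:ℝ)/2 - s by ring]
  ring

/-- `κ_{d,α} = Γ((d+α)/2)/(π^{d/2} Γ(α/2))`. -/
noncomputable def kappaD (d : ℕ) (α : ℝ) : ℝ :=
  Real.Gamma (((d:ℝ) + α) / 2) / (Real.pi ^ ((d:ℝ) / 2) * Real.Gamma (α / 2))

/-- `g(t,x) = κ_{d,α} t / (t^{2/α} + |x|²)^{(d+α)/2}`. -/
noncomputable def gKer (d : ℕ) (α : ℝ) (t : ℝ) (x : EuclideanSpace ℝ (Fin d)) : ℝ :=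
  kappaD d α * t / (t ^ (2/α) + ‖x‖ ^ 2) ^ (((d:ℝ) + α) / 2)

/-- exact value of `∫ g(t,y)^p dy`. -/
theorem g_pow_integral_value
    (d : ℕ) (hd : 1 ≤ d) (α : ℝ) (hα : α ∈ Set.Ioo (0:ℝ) 2)
    (p : ℝ) (hp : p > (d:ℝ) / ((d:ℝ) + α)) (t : ℝ) (ht : 0 < t) :
    ∫ y : EuclideanSpace ℝ (Fin d), gKer d α t y ^ p
      = kappaD d α ^ p * Real.pi ^ ((d:ℝ)/2) / t ^ ((p - 1) * d / α) *
          (Real.Gamma (p * ((d:ℝ) + α) / 2 - (d:ℝ) / 2) / Real.Gamma (p * ((d:ℝ) + α) / 2)) := by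
  obtain ⟨hα0, hα2⟩ := hα
  have hdpos : (0:ℝ) < d := by exact_mod_cast hd
  have hda : 0 < (d:ℝ) + α := by linarith
  have hp0 : 0 < p := lt_trans (by positivity) hp
  set a := t ^ (2/α) with haa
  have ha : 0 < a := rpow_pos_of_pos ht _
  set s := p * ((d:ℝ) + α) / 2 with hss
  have hs0 : 0 < s := by rw [hss]; positivity
  have hs : (d:ℝ)/2 < s := by
    rw [gt_iff_lt, div_lt_iff₀ hda] at hp
    rw [hss]; linarith
  have hκ : 0 < kappaD d α :=
    div_pos (Gamma_pos_of_pos (by positivity))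
      (mul_pos (rpow_pos_of_pos pi_pos _) (Gamma_pos_of_pos (by positivity)))
  have hint : ∀ y : EuclideanSpace ℝ (Fin d), gKer d α t y ^ p
      = (kappaD d α * t) ^ p * (a + ‖y‖^2) ^ (-s) := by
    intro y
    have hb : 0 < a + ‖y‖^2 := by positivity
    rw [gKer, div_rpow (mul_nonneg hκ.le ht.le) (rpow_nonneg hb.le _),
      ← Real.rpow_mul hb.le, show ((d:ℝ)+α)/2 * p = s by rw [hss]; ring,
      div_eq_mul_inv, ← Real.rpow_neg hb.le]
  simp_rw [hint]
  rw [integral_const_mul, aux_integral d ha hs0 hs,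
    mul_rpow hκ.le ht.le, haa, ← Real.rpow_mul ht.le]
  rw [show kappaD d α ^ p * Real.pi ^ ((d:ℝ)/2) / t ^ ((p - 1) * d / α)
      = kappaD d α ^ p * Real.pi ^ ((d:ℝ)/2) * t ^ (-((p - 1) * d / α)) by
    rw [Real.rpow_neg ht.le, div_eq_mul_inv]]
  have key : t ^ p * t ^ (2/α * ((d:ℝ)/2 - s)) = t ^ (-((p - 1) * d / α)) := by
    rw [← Real.rpow_add ht]
    congr 1
    rw [hss]
    field_simp
    ring
  linear_combination kappaD d α ^ p * Real.pi ^ ((d:ℝ)/2) *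
    (Real.Gamma (s - (d:ℝ)/2) / Real.Gamma s) * key
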